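/- For every forest G on n vertices, every integer m with 1 ≤ m ≤ n, and every real c with 0 < c < 1, there is a cut (B,W) in G with c·m < |B| ≤ m and e_G(B,W) ≤ ⌈2c/(1−c)⌉·Δ(G), where Δ(G) is the maximum degree of G. -/

import Mathlib

open scoped Classical

namespace MinBisection

noncomputable section

variable {V ι : Type*}

/-- The number of edges of `G` with one endpoint in `B` and the other outside of `B`,
i.e., the width `e_G(B, W)` of the cut `(B, W)` where `W` is the complement of `B`. -/
def cutWidth (G : SimpleGraph V) (B : Finset V) : ℕ :=
  Nat.card {e : Sym2 V // ∃ x y, G.Adj x y ∧ x ∈ B ∧ y ∉ B ∧ e = s(x, y)}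

/-- The number of edges of `G` whose endpoints lie in two different parts of the
partition `(B, W, Z)` of the vertex set. -/
def cutWidth3 (G : SimpleGraph V) (B W Z : Finset V) : ℕ :=
  Nat.card {e : Sym2 V // ∃ x y, G.Adj x y ∧ e = s(x, y) ∧
    ¬ ((x ∈ B ∧ y ∈ B) ∨ (x ∈ W ∧ y ∈ W) ∨ (x ∈ Z ∧ y ∈ Z))}

/-- `(B, Bᶜ)` is a bisection: the sizes of the two parts differ by at most one. -/
def IsBisection [Fintype V] (B : Finset V) : Prop :=
  B.card ≤ Bᶜ.card + 1 ∧ Bᶜ.card ≤ B.card + 1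

/-- The minimum bisection width `MinBis(G)`. -/
def minBis (G : SimpleGraph V) [Fintype V] : ℕ :=
  sInf {k | ∃ B : Finset V, IsBisection B ∧ cutWidth G B = k}

/-- The maximum degree `Δ(G)`. -/
def maxDeg (G : SimpleGraph V) [Fintype V] : ℕ :=
  Finset.univ.sup fun v => Nat.card {u // G.Adj v u}

/-- The number of vertices on a longest path in `G`. -/
def longestPathCard (G : SimpleGraph V) : ℕ :=
  sSup {k | ∃ (u v : V) (p : G.Walk u v), p.IsPath ∧ k = p.support.length}

/-- The relative diameter `diam*` of a connected graph: the number of vertices on a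
longest path divided by the number of vertices. -/
def diamStar (G : SimpleGraph V) [Fintype V] : ℝ :=
  (longestPathCard G : ℝ) / (Fintype.card V : ℝ)

/-- The number of vertices on a longest path contained in the connected component `c`. -/
def compLongestPathCard (G : SimpleGraph V) (c : G.ConnectedComponent) : ℕ :=
  sSup {k | ∃ (u v : V) (p : G.Walk u v), p.IsPath ∧ G.connectedComponentMk u = c ∧
    k = p.support.length}

/-- The relative diameter `diam*` of a forest: the sum over all connected components of the
number of vertices on a longest path in the component, divided by the number of vertices. -/
def forestDiamStar (G : SimpleGraph V) [Fintype V] : ℝ :=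
  letI : Fintype G.ConnectedComponent := Fintype.ofFinite _
  (∑ c : G.ConnectedComponent, (compLongestPathCard G c : ℝ)) / (Fintype.card V : ℝ)

/-- `(T, X)` is a tree decomposition of `G`. -/
structure IsTreeDecomp (G : SimpleGraph V) (T : SimpleGraph ι) (X : ι → Finset V) : Prop where
  isTree : T.IsTree
  mem_cluster : ∀ v : V, ∃ i, v ∈ X i
  edge_cluster : ∀ ⦃u v : V⦄, G.Adj u v → ∃ i, u ∈ X i ∧ v ∈ X i
  inter_subset : ∀ ⦃i j : ι⦄ (p : T.Walk i j), p.IsPath → ∀ h ∈ p.support, X i ∩ X j ⊆ X h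

/-- The weight `w(P, X)` of a path `p` of the tree `T` with respect to the clusters `X`:
the cardinality of the union of the clusters along the path. -/
def walkWeight (X : ι → Finset V) {T : SimpleGraph ι} {i j : ι} (p : T.Walk i j) : ℕ :=
  (p.support.toFinset.biUnion X).card

/-- The relative weight `r(T, X)` of a heaviest path in the tree decomposition `(T, X)`. -/
def rTD [Fintype V] (T : SimpleGraph ι) (X : ι → Finset V) : ℝ :=
  (↑(sSup {w : ℕ | ∃ (i j : ι) (p : T.Walk i j), p.IsPath ∧ w = walkWeight X p}) : ℝ) /
    (Fintype.card V : ℝ)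

/-- The path `p` is nonredundant: one of its two ends `i` is a nonredundant end, i.e.,
`X i ≠ ∅` and no cluster along the path contains the previous one when traversed from `i`. -/
def NonredundantPath (X : ι → Finset V) {T : SimpleGraph ι} {i j : ι} (p : T.Walk i j) : Prop :=
  (X i ≠ ∅ ∧ List.Chain' (fun a b => ¬ X b ⊆ X a) p.support) ∨
  (X j ≠ ∅ ∧ List.Chain' (fun a b => ¬ X b ⊆ X a) p.reverse.support)

/-- `R_i`: the set of vertices whose path node (first node along `p`, traversed from the
end `i₀`, whose cluster contains the vertex) is `i`. -/
def Rset (X : ι → Finset V) {T : SimpleGraph ι} {i₀ j₀ : ι} (p : T.Walk i₀ j₀) (i : ι) :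
    Set V :=
  {x | ∃ (k : ℕ) (hk : k < p.support.length), p.support.get ⟨k, hk⟩ = i ∧ x ∈ X i ∧
    ∀ (l : ℕ) (hl : l < k), x ∉ X (p.support.get ⟨l, hl.trans hk⟩)}

/-- `S_i`: the union of the clusters over the component `T_i` of `T - E(P)` containing `i`,
minus `R = ⋃_{h ∈ V(P)} X^h`. -/
def Sset (X : ι → Finset V) {T : SimpleGraph ι} {i₀ j₀ : ι} (p : T.Walk i₀ j₀) (i : ι) :
    Set V :=
  {x | (∃ j, (∃ q : T.Walk i j, ∀ e ∈ q.edges, e ∉ p.edges) ∧ x ∈ X j) ∧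
    ∀ h ∈ p.support, x ∉ X h}

end

end MinBisection

namespace MBAux

open Finset SimpleGraph

variable {V : Type*}

/-- The finset of edges with one endpoint in `S` and the other in `T`. -/
noncomputable def xedges [Fintype V] (G : SimpleGraph V) (S T : Finset V) : Finset (Sym2 V) :=
  Finset.univ.filter fun e => ∃ x y, G.Adj x y ∧ x ∈ S ∧ y ∈ T ∧ e = s(x, y)

lemma mem_xedges [Fintype V] {G : SimpleGraph V} {S T : Finset V} {e : Sym2 V} :
    e ∈ xedges G S T ↔ ∃ x y, G.Adj x y ∧ x ∈ S ∧ y ∈ T ∧ e = s(x, y) := by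
  simp [xedges]

lemma xedges_mono_right [Fintype V] {G : SimpleGraph V} {S T₁ T₂ : Finset V} (h : T₁ ⊆ T₂) :
    xedges G S T₁ ⊆ xedges G S T₂ := by
  intro e he
  rw [mem_xedges] at he ⊢
  obtain ⟨x, y, h1, h2, h3, h4⟩ := he
  exact ⟨x, y, h1, h2, h h3, h4⟩

lemma xedges_union_left [Fintype V] {G : SimpleGraph V} {S₁ S₂ T : Finset V} :
    xedges G (S₁ ∪ S₂) T ⊆ xedges G S₁ T ∪ xedges G S₂ T := by
  intro e he
  rw [mem_xedges] at he
  obtain ⟨x, y, h1, h2, h3, h4⟩ := he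
  rw [Finset.mem_union] at h2 ⊢
  rcases h2 with h2 | h2
  · exact Or.inl (mem_xedges.2 ⟨x, y, h1, h2, h3, h4⟩)
  · exact Or.inr (mem_xedges.2 ⟨x, y, h1, h2, h3, h4⟩)

lemma xedges_empty_left [Fintype V] {G : SimpleGraph V} {T : Finset V} :
    xedges G ∅ T = ∅ := by
  ext e; simp [mem_xedges]

lemma xedges_empty_right [Fintype V] {G : SimpleGraph V} {S : Finset V} :
    xedges G S ∅ = ∅ := by
  ext e; simp [mem_xedges]

lemma degree_le_maxDeg [Fintype V] (G : SimpleGraph V) (v : V) :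
    G.degree v ≤ MinBisection.maxDeg G := by
  classical
  have h : Nat.card {u // G.Adj v u} = G.degree v := by
    have h1 : Nat.card {u // G.Adj v u} = Nat.card (G.neighborSet v) := rfl
    rw [h1, Nat.card_eq_fintype_card, SimpleGraph.card_neighborSet_eq_degree]
  have hle : Nat.card {u // G.Adj v u} ≤
      Finset.univ.sup (fun w => Nat.card {u // G.Adj w u}) :=
    Finset.le_sup (f := fun w => Nat.card {u // G.Adj w u}) (Finset.mem_univ v)
  rw [← h]
  exact hle

lemma cutWidth_eq_xedges [Fintype V] (G : SimpleGraph V) (B : Finset V) :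
    MinBisection.cutWidth G B = (xedges G B (Finset.univ \ B)).card := by
  classical
  have hset : {e : Sym2 V | ∃ x y, G.Adj x y ∧ x ∈ B ∧ y ∉ B ∧ e = s(x, y)} =
      ↑(xedges G B (Finset.univ \ B)) := by
    ext e
    simp only [Set.mem_setOf_eq, Finset.mem_coe, mem_xedges, Finset.mem_sdiff,
      Finset.mem_univ, true_and]
  have h1 : MinBisection.cutWidth G B =
      Set.ncard {e : Sym2 V | ∃ x y, G.Adj x y ∧ x ∈ B ∧ y ∉ B ∧ e = s(x, y)} :=
    (Nat.card_coe_set_eq _).symm ▸ rfl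
  rw [MinBisection.cutWidth, show Nat.card {e : Sym2 V // ∃ x y, G.Adj x y ∧ x ∈ B ∧ y ∉ B ∧ e = s(x, y)} = Set.ncard {e : Sym2 V | ∃ x y, G.Adj x y ∧ x ∈ B ∧ y ∉ B ∧ e = s(x, y)} from Nat.card_coe_set_eq _]
  rw [hset, Set.ncard_coe_finset]

lemma no_cycle_helper {G : SimpleGraph V} (hF : G.IsAcyclic) {v x₁ x₂ : V}
    (h1 : G.Adj v x₁) (h2 : G.Adj v x₂) (hne : x₁ ≠ x₂) (p : G.Walk x₁ x₂)
    (hv : v ∉ p.support) : False := by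
  rw [SimpleGraph.isAcyclic_iff_path_unique] at hF
  have hq : p.bypass.IsPath := SimpleGraph.Walk.bypass_isPath p
  have hv' : v ∉ p.bypass.support := fun h => hv (SimpleGraph.Walk.support_bypass_subset p h)
  have hp1 : (SimpleGraph.Walk.cons h1 p.bypass).IsPath := hq.cons hv'
  have hp2 : (SimpleGraph.Walk.cons h2 (SimpleGraph.Walk.nil)).IsPath := by
    simp [SimpleGraph.Walk.isPath_iff_eq_nil, h2.ne]
  have heq := hF ⟨_, hp1⟩ ⟨_, hp2⟩
  have hlen := congrArg (fun q : G.Path v x₂ => q.1.length) heq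
  simp only [SimpleGraph.Walk.length_cons, SimpleGraph.Walk.length_nil] at hlen
  have hlen0 : p.bypass.length = 0 := by omega
  exact hne (SimpleGraph.Walk.eq_of_length_eq_zero hlen0)

/-- Reachability through a walk entirely inside `W`. -/
def Rel (G : SimpleGraph V) (W : Finset V) (a b : V) : Prop :=
  ∃ p : G.Walk a b, ∀ z ∈ p.support, z ∈ W

lemma Rel.symm' {G : SimpleGraph V} {W : Finset V} {a b : V} (h : Rel G W a b) :
    Rel G W b a := by
  obtain ⟨p, hp⟩ := h
  exact ⟨p.reverse, fun z hz => hp z (by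
    simpa [SimpleGraph.Walk.support_reverse, List.mem_reverse] using hz)⟩

lemma Rel.trans' {G : SimpleGraph V} {W : Finset V} {a b c : V}
    (h1 : Rel G W a b) (h2 : Rel G W b c) : Rel G W a c := by
  obtain ⟨p, hp⟩ := h1
  obtain ⟨q, hq⟩ := h2
  refine ⟨p.append q, fun z hz => ?_⟩
  rw [SimpleGraph.Walk.mem_support_append_iff] at hz
  rcases hz with hz | hz
  · exact hp z hz
  · exact hq z hz

noncomputable def comp (G : SimpleGraph V) (W : Finset V) (a : V) : Finset V :=
  W.filter (Rel G W a)

lemma mem_comp {G : SimpleGraph V} {W : Finset V} {a b : V} :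
    b ∈ comp G W a ↔ b ∈ W ∧ Rel G W a b := Finset.mem_filter

lemma comp_subset {G : SimpleGraph V} {W : Finset V} {a : V} : comp G W a ⊆ W :=
  Finset.filter_subset _ _

lemma self_mem_comp {G : SimpleGraph V} {W : Finset V} {a : V} (ha : a ∈ W) :
    a ∈ comp G W a :=
  mem_comp.2 ⟨ha, ⟨SimpleGraph.Walk.nil, by simpa using ha⟩⟩

lemma rel_of_mem_comp {G : SimpleGraph V} {W : Finset V} {a b : V}
    (hb : b ∈ comp G W a) : Rel G W a b := (mem_comp.1 hb).2

lemma comp_eq_of_mem {G : SimpleGraph V} {W : Finset V} {a b : V}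
    (hb : b ∈ comp G W a) : comp G W a = comp G W b := by
  have hab : Rel G W a b := rel_of_mem_comp hb
  ext x
  rw [mem_comp, mem_comp]
  exact ⟨fun ⟨hx, h⟩ => ⟨hx, hab.symm'.trans' h⟩, fun ⟨hx, h⟩ => ⟨hx, hab.trans' h⟩⟩

lemma comp_closed {G : SimpleGraph V} {W : Finset V} {a b c : V}
    (hb : b ∈ comp G W a) (hcW : c ∈ W) (hadj : G.Adj b c) : c ∈ comp G W a := by
  refine mem_comp.2 ⟨hcW, (rel_of_mem_comp hb).trans' ?_⟩
  refine ⟨SimpleGraph.Walk.cons hadj SimpleGraph.Walk.nil, ?_⟩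
  intro z hz
  simp only [SimpleGraph.Walk.support_cons, SimpleGraph.Walk.support_nil,
    List.mem_cons, List.mem_singleton] at hz
  rcases hz with rfl | hz
  · exact (mem_comp.1 hb).1
  · simp at hz; subst hz; exact hcW

lemma greedySum {α : Type*} [DecidableEq α] (f : α → ℕ) (r : ℕ) (hr : 1 ≤ r)
    (s : Finset α) :
    (∀ a ∈ s, 2 * f a < r) → r ≤ ∑ a ∈ s, f a →
    ∃ s' ⊆ s, r ≤ 2 * ∑ a ∈ s', f a ∧ ∑ a ∈ s', f a < r := by
  induction s using Finset.induction_on with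
  | empty => intro _ h; simp at h; omega
  | @insert a s₀ ha ih =>
    intro hsmall hsum
    by_cases h1 : r ≤ ∑ x ∈ s₀, f x
    · obtain ⟨s', hs', h⟩ := ih (fun x hx => hsmall x (Finset.mem_insert_of_mem hx)) h1
      exact ⟨s', hs'.trans (Finset.subset_insert _ _), h⟩
    · push_neg at h1
      by_cases h2 : r ≤ 2 * ∑ x ∈ s₀, f x
      · exact ⟨s₀, Finset.subset_insert _ _, h2, h1⟩
      · push_neg at h2
        refine ⟨insert a s₀, Finset.Subset.refl _, ?_, ?_⟩
        · rw [Finset.sum_insert ha] at hsum ⊢; omega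
        · rw [Finset.sum_insert ha] at hsum ⊢
          have := hsmall a (Finset.mem_insert_self _ _)
          omega

lemma claimA {V : Type*} [Fintype V] (G : SimpleGraph V) (hF : G.IsAcyclic)
    (P : Finset V) (r : ℕ) (hr : 1 ≤ r) (hrP : r ≤ P.card) :
    ∃ S : Finset V, S ⊆ P ∧ r ≤ 2 * S.card ∧ S.card ≤ r ∧
      (xedges G S (P \ S)).card ≤ MinBisection.maxDeg G := by
  classical
  set cand := P.powerset.filter (fun C => r ≤ C.card ∧ (xedges G C (P \ C)).card ≤ 1)
    with hcand
  have hPc : P ∈ cand := by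
    rw [hcand, Finset.mem_filter, Finset.mem_powerset]
    refine ⟨Finset.Subset.refl _, hrP, ?_⟩
    rw [Finset.sdiff_self, xedges_empty_right]
    simp
  obtain ⟨C, hCmem, hmin⟩ := Finset.exists_min_image cand Finset.card ⟨P, hPc⟩
  rw [hcand, Finset.mem_filter, Finset.mem_powerset] at hCmem
  obtain ⟨hCP, hrC, hCpend⟩ := hCmem
  have hone : ∀ {x y : V}, G.Adj x y → 1 ≤ MinBisection.maxDeg G := by
    intro x y h
    have hd : 0 < G.degree x := (G.degree_pos_iff_exists_adj x).2 ⟨y, h⟩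
    exact le_trans hd (degree_le_maxDeg G x)
  rcases eq_or_lt_of_le hrC with heq | hlt
  · refine ⟨C, hCP, by omega, by omega, ?_⟩
    rcases Nat.eq_zero_or_pos (xedges G C (P \ C)).card with h0 | hpos
    · exact h0 ▸ Nat.zero_le _
    · obtain ⟨e, he⟩ := Finset.card_pos.1 hpos
      rw [mem_xedges] at he
      obtain ⟨x, y, hadj, -⟩ := he
      exact le_trans hCpend (hone hadj)
  · obtain ⟨v, hvC, hstar⟩ : ∃ v ∈ C, ∀ x ∈ C, x ≠ v → ∀ y ∈ P, y ∉ C → ¬ G.Adj x y := by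
      by_cases hne : (xedges G C (P \ C)).Nonempty
      · obtain ⟨e, he⟩ := hne
        rw [mem_xedges] at he
        obtain ⟨x, y, hadj, hxC, hyPC, rfl⟩ := he
        refine ⟨x, hxC, fun x' hx' hx'v y' hy'P hy'C hadj' => ?_⟩
        have h' : s(x', y') ∈ xedges G C (P \ C) :=
          mem_xedges.2 ⟨x', y', hadj', hx', Finset.mem_sdiff.2 ⟨hy'P, hy'C⟩, rfl⟩
        have hxe : s(x, y) ∈ xedges G C (P \ C) :=
          mem_xedges.2 ⟨x, y, hadj, hxC, hyPC, rfl⟩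
        have heq2 : s(x', y') = s(x, y) := Finset.card_le_one.1 hCpend _ h' _ hxe
        rw [Sym2.eq_iff] at heq2
        rcases heq2 with ⟨h1, h2⟩ | ⟨h1, h2⟩
        · exact hx'v h1
        · rw [Finset.mem_sdiff] at hyPC; exact hyPC.2 (h1 ▸ hx')
      · have hC0 : C.Nonempty := Finset.card_pos.1 (by omega)
        obtain ⟨v, hv⟩ := hC0
        exact ⟨v, hv, fun x hx hxv y hyP hyC hadj =>
          hne ⟨s(x, y), mem_xedges.2 ⟨x, y, hadj, hx, Finset.mem_sdiff.2 ⟨hyP, hyC⟩, rfl⟩⟩⟩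
    set W := C.erase v with hW
    have hWC : W ⊆ C := Finset.erase_subset _ _
    have hWcard : W.card = C.card - 1 := Finset.card_erase_of_mem hvC
    have hrW : r ≤ W.card := by omega
    have hvW : v ∉ W := Finset.notMem_erase _ _
    have hstruct : ∀ S : Finset V, S ⊆ W → (∀ x ∈ S, ∀ y ∈ W, G.Adj x y → y ∈ S) →
        ∀ e ∈ xedges G S (P \ S), ∃ x ∈ S, G.Adj x v ∧ e = s(x, v) := by
      intro S hSW hcl e he
      rw [mem_xedges] at he
      obtain ⟨x, y, hadj, hxS, hyPS, rfl⟩ := he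
      rw [Finset.mem_sdiff] at hyPS
      have hxW := hSW hxS
      have hxv : x ≠ v := Finset.ne_of_mem_erase hxW
      have hxC : x ∈ C := Finset.mem_of_mem_erase hxW
      by_cases hyC : y ∈ C
      · by_cases hyv : y = v
        · subst hyv; exact ⟨x, hxS, hadj, rfl⟩
        · have hyW : y ∈ W := Finset.mem_erase.2 ⟨hyv, hyC⟩
          exact absurd (hcl x hxS y hyW hadj) hyPS.2
      · exact absurd hadj (hstar x hxC hxv y hyPS.1 hyC)
    have hcross : ∀ S : Finset V, S ⊆ W → (∀ x ∈ S, ∀ y ∈ W, G.Adj x y → y ∈ S) →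
        (xedges G S (P \ S)).card ≤ MinBisection.maxDeg G := by
      intro S hSW hcl
      have hsub : xedges G S (P \ S) ⊆ (G.neighborFinset v).image (fun u => s(u, v)) := by
        intro e he
        obtain ⟨x, hxS, hadj, rfl⟩ := hstruct S hSW hcl e he
        refine Finset.mem_image.2 ⟨x, ?_, rfl⟩
        rw [SimpleGraph.mem_neighborFinset]
        exact hadj.symm
      calc (xedges G S (P \ S)).card ≤ _ := Finset.card_le_card hsub
        _ ≤ (G.neighborFinset v).card := Finset.card_image_le
        _ = G.degree v := rfl
        _ ≤ MinBisection.maxDeg G := degree_le_maxDeg G v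
    have hsmall : ∀ a ∈ W, (comp G W a).card < r := by
      intro a ha
      by_contra hge
      push_neg at hge
      have hclosed : ∀ x ∈ comp G W a, ∀ y ∈ W, G.Adj x y → y ∈ comp G W a :=
        fun x hx y hy hadj => comp_closed hx hy hadj
      have hpend : (xedges G (comp G W a) (P \ comp G W a)).card ≤ 1 := by
        rw [Finset.card_le_one]
        intro e₁ h₁ e₂ h₂
        obtain ⟨x₁, hx₁, hadj₁, rfl⟩ := hstruct _ comp_subset hclosed e₁ h₁
        obtain ⟨x₂, hx₂, hadj₂, rfl⟩ := hstruct _ comp_subset hclosed e₂ h₂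
        by_cases hx12 : x₁ = x₂
        · rw [hx12]
        · exfalso
          have hrel : Rel G W x₁ x₂ :=
            (rel_of_mem_comp hx₁).symm'.trans' (rel_of_mem_comp hx₂)
          obtain ⟨p, hp⟩ := hrel
          exact no_cycle_helper hF hadj₁.symm hadj₂.symm hx12 p (fun h => hvW (hp v h))
      have hmemc : comp G W a ∈ cand := by
        rw [hcand, Finset.mem_filter, Finset.mem_powerset]
        exact ⟨comp_subset.trans (hWC.trans hCP), hge, hpend⟩
      have h1 := hmin _ hmemc
      have h2 : (comp G W a).card ≤ W.card := Finset.card_le_card comp_subset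
      omega
    by_cases hbig : ∃ a ∈ W, r ≤ 2 * (comp G W a).card
    · obtain ⟨a, ha, h2a⟩ := hbig
      exact ⟨comp G W a, comp_subset.trans (hWC.trans hCP), h2a, (hsmall a ha).le,
        hcross _ comp_subset (fun x hx y hy hadj => comp_closed hx hy hadj)⟩
    · push_neg at hbig
      set F := W.image (fun a => comp G W a) with hFdef
      have hdisj : ∀ D₁ ∈ F, ∀ D₂ ∈ F, D₁ ≠ D₂ → Disjoint D₁ D₂ := by
        intro D₁ h₁ D₂ h₂ hne
        obtain ⟨a, ha, rfl⟩ := Finset.mem_image.1 h₁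
        obtain ⟨b, hb, rfl⟩ := Finset.mem_image.1 h₂
        rw [Finset.disjoint_left]
        intro x hxa hxb
        exact hne ((comp_eq_of_mem hxa).trans (comp_eq_of_mem hxb).symm)
      have hbiUnion : F.biUnion id = W := by
        ext x
        simp only [Finset.mem_biUnion, id]
        constructor
        · rintro ⟨D, hD, hxD⟩
          obtain ⟨a, -, rfl⟩ := Finset.mem_image.1 hD
          exact comp_subset hxD
        · intro hx
          exact ⟨comp G W x, Finset.mem_image.2 ⟨x, hx, rfl⟩, self_mem_comp hx⟩
      have hsum : ∑ D ∈ F, D.card = W.card := by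
        rw [← hbiUnion]
        exact (Finset.card_biUnion hdisj).symm
      have hgr := greedySum Finset.card r hr F
        (fun D hD => by
          obtain ⟨a, ha, rfl⟩ := Finset.mem_image.1 hD
          exact hbig a ha)
        (by rw [hsum]; exact hrW)
      obtain ⟨F', hF'sub, hge2, hlt2⟩ := hgr
      set S := F'.biUnion id with hSdef
      have hScard : S.card = ∑ D ∈ F', D.card :=
        Finset.card_biUnion (fun x hx y hy => hdisj x (hF'sub hx) y (hF'sub hy))
      have hSsubW : S ⊆ W := by
        intro x hx
        rw [hSdef, Finset.mem_biUnion] at hx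
        obtain ⟨D, hD, hxD⟩ := hx
        obtain ⟨a, -, rfl⟩ := Finset.mem_image.1 (hF'sub hD)
        exact comp_subset hxD
      have hScl : ∀ x ∈ S, ∀ y ∈ W, G.Adj x y → y ∈ S := by
        intro x hx y hy hadj
        rw [hSdef, Finset.mem_biUnion] at hx ⊢
        obtain ⟨D, hD, hxD⟩ := hx
        obtain ⟨a, ha, rfl⟩ := Finset.mem_image.1 (hF'sub hD)
        exact ⟨_, hD, comp_closed hxD hy hadj⟩
      exact ⟨S, hSsubW.trans (hWC.trans hCP), by omega, by omega, hcross S hSsubW hScl⟩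

lemma mainstep {V : Type*} [Fintype V] (G : SimpleGraph V) (hF : G.IsAcyclic) :
    ∀ (t : ℕ) (P : Finset V) (r : ℕ), r ≤ P.card →
    ∃ S : Finset V, S ⊆ P ∧ S.card ≤ r ∧ 2 ^ t * (r - S.card) ≤ r ∧
      (xedges G S (P \ S)).card ≤ t * MinBisection.maxDeg G := by
  intro t
  induction t with
  | zero =>
    intro P r hrP
    refine ⟨∅, Finset.empty_subset _, Nat.zero_le _, by simp, ?_⟩
    rw [xedges_empty_left]
    simp
  | succ t ih =>
    intro P r hrP
    rcases Nat.eq_zero_or_pos r with rfl | hr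
    · refine ⟨∅, Finset.empty_subset _, le_rfl, by simp, ?_⟩
      rw [xedges_empty_left]; simp
    · obtain ⟨S₁, hS₁P, h2, hle1, hcross₁⟩ := claimA G hF P r hr hrP
      have hcard1 : r - S₁.card ≤ (P \ S₁).card := by
        have := Finset.card_sdiff_of_subset hS₁P
        omega
      obtain ⟨S', hS'sub, hS'le, hpow, hcross'⟩ := ih (P \ S₁) (r - S₁.card) hcard1
      have hd : Disjoint S₁ S' :=
        Finset.disjoint_left.2 fun x hx1 hx2 => (Finset.mem_sdiff.1 (hS'sub hx2)).2 hx1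
      refine ⟨S₁ ∪ S', Finset.union_subset hS₁P
        (hS'sub.trans (Finset.sdiff_subset)), ?_, ?_, ?_⟩
      · rw [Finset.card_union_of_disjoint hd]; omega
      · rw [Finset.card_union_of_disjoint hd]
        have h3 : 2 ^ t * (r - S₁.card - S'.card) ≤ r - S₁.card := hpow
        have h4 : r - (S₁.card + S'.card) = r - S₁.card - S'.card := by omega
        rw [pow_succ, h4]
        calc 2 ^ t * 2 * (r - S₁.card - S'.card)
            = 2 * (2 ^ t * (r - S₁.card - S'.card)) := by ring
          _ ≤ 2 * (r - S₁.card) := by omega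
          _ ≤ r := by omega
      · have hsd : P \ (S₁ ∪ S') = (P \ S₁) \ S' := by
          ext x; simp only [Finset.mem_sdiff, Finset.mem_union]; tauto
        have hsub1 : xedges G (S₁ ∪ S') (P \ (S₁ ∪ S')) ⊆
            xedges G S₁ (P \ S₁) ∪ xedges G S' ((P \ S₁) \ S') := by
          intro e he
          have := xedges_union_left he
          rw [Finset.mem_union] at this ⊢
          rcases this with h | h
          · exact Or.inl (xedges_mono_right (by rw [hsd]; exact Finset.sdiff_subset) h)
          · exact Or.inr (by rw [← hsd]; exact h)
        calc (xedges G (S₁ ∪ S') (P \ (S₁ ∪ S'))).card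
            ≤ (xedges G S₁ (P \ S₁) ∪ xedges G S' ((P \ S₁) \ S')).card :=
              Finset.card_le_card hsub1
          _ ≤ (xedges G S₁ (P \ S₁)).card + (xedges G S' ((P \ S₁) \ S')).card :=
              Finset.card_union_le _ _
          _ ≤ MinBisection.maxDeg G + t * MinBisection.maxDeg G := by
              exact Nat.add_le_add hcross₁ hcross'
          _ = (t + 1) * MinBisection.maxDeg G := by ring

end MBAux
/-- (Approximate cut in forests.) For every forest `G` on `n` vertices,
every integer `1 ≤ m ≤ n`, and every real `0 < c < 1`, there is a cut `(B, W)` in `G` with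
`c m < |B| ≤ m` and `e_G(B, W) ≤ ⌈2c/(1-c)⌉ Δ(G)`. -/
theorem MinBisection.approx_cut_forest {V : Type*} [Fintype V] (G : SimpleGraph V)
    (hF : G.IsAcyclic) (m : ℕ) (hm1 : 1 ≤ m) (hmn : m ≤ Fintype.card V)
    (c : ℝ) (hc0 : 0 < c) (hc1 : c < 1) :
    ∃ B : Finset V, c * (m : ℝ) < (B.card : ℝ) ∧ B.card ≤ m ∧
      cutWidth G B ≤ ⌈2 * c / (1 - c)⌉₊ * maxDeg G := by
  classical
  set K := ⌈2 * c / (1 - c)⌉₊ with hK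
  have hmn' : m ≤ (Finset.univ : Finset V).card := by simpa [Finset.card_univ] using hmn
  obtain ⟨B, -, hBm, hpow, hcross⟩ := MBAux.mainstep G hF K Finset.univ m hmn'
  refine ⟨B, ?_, hBm, ?_⟩
  · have h1c : (0:ℝ) < 1 - c := by linarith
    have hy : 2 * c / (1 - c) ≤ (K : ℝ) := Nat.le_ceil _
    have hy' : 2 * c ≤ (K:ℝ) * (1 - c) := (div_le_iff₀ h1c).1 hy
    have hK1 : (K:ℝ) + 1 ≤ (2:ℝ) ^ K := by
      have h := Nat.lt_two_pow_self (n := K)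
      exact_mod_cast h
    have hstep : (1 - c) * ((K:ℝ) + 1) ≤ (1 - c) * 2 ^ K :=
      mul_le_mul_of_nonneg_left hK1 h1c.le
    have hkey : (1 : ℝ) < (1 - c) * 2 ^ K := by nlinarith [hy', hstep, hc0]
    set d := m - B.card with hd
    have hBd : B.card + d = m := by omega
    have hdr : (2:ℝ) ^ K * d ≤ m := by exact_mod_cast hpow
    have hBcast : (B.card : ℝ) = (m:ℝ) - d := by
      have h := congrArg (Nat.cast : ℕ → ℝ) hBd
      push_cast at h
      linarith
    have hm1' : (1:ℝ) ≤ m := by exact_mod_cast hm1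
    rcases Nat.eq_zero_or_pos d with h0 | hdpos
    · rw [hBcast, h0]
      push_cast
      nlinarith [hm1']
    · have hd0 : (0:ℝ) < d := by exact_mod_cast hdpos
      have h1 : (1:ℝ) * d < ((1 - c) * 2 ^ K) * d := mul_lt_mul_of_pos_right hkey hd0
      have h2 : (1 - c) * ((2:ℝ) ^ K * d) ≤ (1 - c) * m :=
        mul_le_mul_of_nonneg_left hdr h1c.le
      rw [hBcast]
      nlinarith [h1, h2]
  · rw [MBAux.cutWidth_eq_xedges]
    exact hcross
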